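/- Let F : ℝ^d → ℝ^d be C¹, y_* ∈ X, and set M = sup_{t∈[0,T]} ‖DF(y_*(t))‖²_op. For v ∈ X define w(t) = −∫₀ᵗ DF(y_*(s)) v(s) ds − ∫₀ᵗ ∫ₛᵀ [DF(y_*(τ))]ᵀ (v'(τ) − DF(y_*(τ)) v(τ)) dτ ds − ∫₀ᵀ [DF(y_*(s))]ᵀ (v'(s) − DF(y_*(s)) v(s)) ds. Then ‖w‖²_X ≤ 2M(2T² + T + 𝔠̃² + T𝔠̃²(1+2T)M)‖v‖²_X. In particular, if M < 1/(2T² + T + 𝔠̃² + √((2T² + T + 𝔠̃²)² + 2T𝔠̃²(1+2T))), then ‖w‖_X < ‖v‖_X for every nonzero v ∈ X. -/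

import Mathlib

open MeasureTheory Set
open scoped RealInnerProductSpace

noncomputable section

/-- `ℝ^d`. -/
abbrev Euc (d : ℕ) := EuclideanSpace ℝ (Fin d)

/-- `(u, u')` represents an element of `X = H¹(0,T;ℝ^d)`: `u` is absolutely continuous
(equal to the integral of its a.e. derivative `u'`) and `u' ∈ L²(0,T;ℝ^d)`. -/
def MemX {d : ℕ} (T : ℝ) (u u' : ℝ → Euc d) : Prop :=
  MemLp u' 2 (volume.restrict (Icc (0:ℝ) T)) ∧
  ∀ t ∈ Icc (0:ℝ) T, u t = u 0 + ∫ s in (0:ℝ)..t, u' s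

/-- The inner product `⟨·,·⟩_X` on `X`. -/
def innerX {d : ℕ} (T : ℝ) (u u' v v' : ℝ → Euc d) : ℝ :=
  (∫ t in (0:ℝ)..T, ⟪u' t, v' t⟫) + ⟪u 0, v 0⟫

/-- The energy norm `‖·‖_X` on `X`. -/
def normX {d : ℕ} (T : ℝ) (u u' : ℝ → Euc d) : ℝ :=
  Real.sqrt (innerX T u u' u u')

/-- The `L²(0,T;ℝ^d)` norm. -/
def L2norm {d : ℕ} (T : ℝ) (w : ℝ → Euc d) : ℝ :=
  Real.sqrt (∫ t in (0:ℝ)..T, ‖w t‖ ^ 2)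

/-- The least-squares objective `J(y; F, f, g)`. -/
def Jfun {d : ℕ} (T : ℝ) (F : Euc d → Euc d) (f : ℝ → Euc d) (g : Euc d)
    (y y' : ℝ → Euc d) : ℝ :=
  (1/2) * (∫ t in (0:ℝ)..T, ‖y' t - F (y t) - f t‖ ^ 2) + (1/2) * ‖y 0 - g‖ ^ 2

/-- A partition `0 = τ₀ < τ₁ < ⋯ < τ_N = T` of `[0,T]`. -/
structure TimePartition (T : ℝ) where
  N : ℕ
  τ : ℕ → ℝ
  hN : 0 < N
  left : τ 0 = 0
  right : τ N = T
  mono : ∀ i < N, τ i < τ (i + 1)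

/-- The mesh size `h = max_i (τ_{i+1} - τ_i)` of a partition. -/
def TimePartition.mesh {T : ℝ} (P : TimePartition T) : ℝ :=
  (Finset.range P.N).sup' (Finset.nonempty_range_iff.mpr P.hN.ne') fun i => P.τ (i + 1) - P.τ i

/-- `v` is (on `[0,T]`) piecewise affine w.r.t. the partition `P`,
i.e. `v` belongs to the piecewise linear finite element space `X^h`. -/
def PWLinear {d : ℕ} {T : ℝ} (P : TimePartition T) (v : ℝ → Euc d) : Prop :=
  ∀ i < P.N, ∃ a b : Euc d, ∀ t ∈ Icc (P.τ i) (P.τ (i + 1)), v t = a + t • b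

/-- `(p, p')` is the orthogonal projection `Π_h (u,u')` of `(u, u') ∈ X` onto the piecewise
linear finite element space `X^h` attached to the partition `P`. -/
def IsProjX {d : ℕ} {T : ℝ} (P : TimePartition T) (u u' p p' : ℝ → Euc d) : Prop :=
  MemX T p p' ∧ PWLinear P p ∧
  ∀ v v' : ℝ → Euc d, MemX T v v' → PWLinear P v →
    innerX T (fun t => u t - p t) (fun t => u' t - p' t) v v' = 0

/-- `(y, y')` is a strong solution of the IVP `y' = F(y) + f(t)`, `y(0) = g`. -/
def IsStrongSol {d : ℕ} (T : ℝ) (F : Euc d → Euc d) (f : ℝ → Euc d) (g : Euc d)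
    (y y' : ℝ → Euc d) : Prop :=
  MemX T y y' ∧ y 0 = g ∧ ∀ᵐ t ∂(volume.restrict (Ioc (0:ℝ) T)), y' t = F (y t) + f t

/-- `(y, y')` is an lsfem solution: a global minimizer of `J(·;F,f,g)` over `X^h`. -/
def IsLSFEMSol {d : ℕ} (T : ℝ) (F : Euc d → Euc d) (f : ℝ → Euc d) (g : Euc d)
    (P : TimePartition T) (y y' : ℝ → Euc d) : Prop :=
  MemX T y y' ∧ PWLinear P y ∧
  ∀ z z' : ℝ → Euc d, MemX T z z' → PWLinear P z →
    Jfun T F f g y y' ≤ Jfun T F f g z z'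

/-- `c` is the smallest constant with `max_{t∈[0,T]} ‖u(t)‖ ≤ c ‖u‖_X` for all `u ∈ X`. -/
def IsEmbC (d : ℕ) (T : ℝ) (c : ℝ) : Prop :=
  IsLeast {a : ℝ | ∀ u u' : ℝ → Euc d, MemX T u u' →
    ∀ t ∈ Icc (0:ℝ) T, ‖u t‖ ≤ a * normX T u u'} c

/-- `c` is the smallest constant with `‖u‖_{L²} ≤ c ‖u‖_X` for all `u ∈ X`. -/
def IsEmbL2 (d : ℕ) (T : ℝ) (c : ℝ) : Prop :=
  IsLeast {a : ℝ | ∀ u u' : ℝ → Euc d, MemX T u u' → L2norm T u ≤ a * normX T u u'} c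

/-- The smallness bound `1/√(2T² + T + c² + √((2T² + T + c²)² + 2Tc²(1+2T)))` from (A2). -/
def A2bound (T c : ℝ) : ℝ :=
  1 / Real.sqrt (2*T^2 + T + c^2 + Real.sqrt ((2*T^2 + T + c^2)^2 + 2*T*c^2*(1+2*T)))

-- === auxiliary lemmas ===
open scoped ENNReal
section Aux
variable {d : ℕ}

lemma aux_finite {T : ℝ} : IsFiniteMeasure (volume.restrict (Icc (0:ℝ) T)) :=
  ⟨by rw [Measure.restrict_apply_univ]; exact measure_Icc_lt_top⟩

lemma aux_cs {T : ℝ} (hT : 0 ≤ T) {f : ℝ → ℝ}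
    (hf : MemLp f 2 (volume.restrict (Icc (0:ℝ) T))) (hpos : ∀ x, 0 ≤ f x) :
    (∫ t in (0:ℝ)..T, f t)^2 ≤ T * ∫ t in (0:ℝ)..T, (f t)^2 := by
  have h2 : (2:ℝ).HolderConjugate 2 := by constructor <;> norm_num
  haveI := aux_finite (T := T)
  have h1 : MemLp (fun _ : ℝ => (1:ℝ)) (ENNReal.ofReal 2) (volume.restrict (Icc (0:ℝ) T)) := by
    simpa using memLp_const (μ := volume.restrict (Icc (0:ℝ) T)) (1:ℝ)
  have hf2 : MemLp f (ENNReal.ofReal 2) (volume.restrict (Icc (0:ℝ) T)) := by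
    simpa using hf
  have H := integral_mul_le_Lp_mul_Lq_of_nonneg h2 (ae_of_all _ hpos)
    (ae_of_all _ fun _ => zero_le_one) hf2 h1
  simp only [mul_one, Real.one_rpow] at H
  have hpow : ∀ x : ℝ, x ^ (2:ℝ) = x ^ 2 := fun x => by
    rw [show (2:ℝ) = ((2:ℕ):ℝ) by norm_num, Real.rpow_natCast]
  simp only [hpow] at H
  have hμ : ∫ _ in Icc (0:ℝ) T, (1:ℝ) = T := by
    simp [Real.volume_Icc, ENNReal.toReal_ofReal hT, hT]
  rw [hμ] at H
  have hIeq : ∀ g : ℝ → ℝ, (∫ t in (0:ℝ)..T, g t) = ∫ t in Icc (0:ℝ) T, g t := by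
    intro g
    rw [intervalIntegral.integral_of_le hT, integral_Icc_eq_integral_Ioc]
  rw [hIeq, hIeq]
  have hJnn : 0 ≤ ∫ t in Icc (0:ℝ) T, (f t)^2 :=
    integral_nonneg fun x => sq_nonneg _
  have hInn : 0 ≤ ∫ t in Icc (0:ℝ) T, f t := integral_nonneg fun x => hpos x
  calc (∫ t in Icc (0:ℝ) T, f t)^2
      ≤ ((∫ t in Icc (0:ℝ) T, (f t)^2) ^ (1/2:ℝ) * T ^ (1/2:ℝ))^2 :=
        pow_le_pow_left₀ hInn H 2
    _ = T * ∫ t in Icc (0:ℝ) T, (f t)^2 := by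
        rw [mul_pow, ← Real.rpow_natCast (_ ^ (1/2:ℝ)) 2, ← Real.rpow_natCast (T ^ (1/2:ℝ)) 2,
          ← Real.rpow_mul hJnn, ← Real.rpow_mul hT]
        norm_num [Real.rpow_one]
        ring

lemma aux_sq_int {T : ℝ} {f : ℝ → Euc d}
    (hf : MemLp f 2 (volume.restrict (Icc (0:ℝ) T))) :
    IntegrableOn (fun t => ‖f t‖^2) (Icc (0:ℝ) T) volume := by
  have := hf.integrable_norm_rpow (by norm_num) (by norm_num)
  have h22 : ((2:ℝ≥0∞)).toReal = ((2:ℕ):ℝ) := by simp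
  rw [h22] at this
  simp only [Real.rpow_natCast] at this
  exact this

lemma aux_ii {T : ℝ} {E : Type*} [NormedAddCommGroup E] {f : ℝ → E} (hT : 0 ≤ T)
    (h : IntegrableOn f (Icc (0:ℝ) T) volume) : IntervalIntegrable f volume 0 T := by
  have h' : IntegrableOn f (uIcc (0:ℝ) T) volume := by rwa [uIcc_of_le hT]
  exact h'.intervalIntegrable

lemma aux_normX_sq {T : ℝ} (hT : 0 ≤ T) (u u' : ℝ → Euc d) :
    normX T u u' ^ 2 = (∫ t in (0:ℝ)..T, ‖u' t‖^2) + ‖u 0‖^2 := by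
  have h1 : innerX T u u' u u' = (∫ t in (0:ℝ)..T, ‖u' t‖^2) + ‖u 0‖^2 := by
    unfold innerX
    congr 1
    · exact intervalIntegral.integral_congr fun x _ => real_inner_self_eq_norm_sq _
    · exact real_inner_self_eq_norm_sq _
  rw [normX, Real.sq_sqrt, h1]
  rw [h1]
  have := intervalIntegral.integral_nonneg (μ := volume)
    (f := fun t => ‖u' t‖^2) hT (fun x _ => sq_nonneg _)
  nlinarith [sq_nonneg ‖u 0‖]

lemma aux_cont {T : ℝ} (hT : 0 ≤ T) {u u' : ℝ → Euc d}
    (h : MemX T u u') : ContinuousOn u (Icc (0:ℝ) T) := by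
  haveI := aux_finite (T := T)
  have hint : IntegrableOn u' (Icc (0:ℝ) T) volume := h.1.integrable one_le_two
  have hc : ContinuousOn (fun t => u 0 + ∫ s in (0:ℝ)..t, u' s) (Icc (0:ℝ) T) := by
    apply continuousOn_const.add
    have := intervalIntegral.continuousOn_primitive_interval
      (a := (0:ℝ)) (b := T) (μ := volume) (f := u') (by rwa [uIcc_of_le hT])
    rwa [uIcc_of_le hT] at this
  exact hc.congr h.2

/-- `DF(y_*(t))`. -/
def auxA (F : Euc d → Euc d) (y : ℝ → Euc d) : ℝ → Euc d →L[ℝ] Euc d :=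
  fun t => fderiv ℝ F (y t)

/-- `[DF(y_*(τ))]ᵀ (v'(τ) − DF(y_*(τ)) v(τ))`. -/
def auxg (F : Euc d → Euc d) (y v v' : ℝ → Euc d) : ℝ → Euc d :=
  fun τ => ContinuousLinearMap.adjoint (auxA F y τ) (v' τ - auxA F y τ (v τ))

end Aux

section Aux2
lemma aux_ii2 {T a : ℝ} {E : Type*} [NormedAddCommGroup E] {f : ℝ → E} (ha : 0 ≤ a) (haT : a ≤ T)
    (h : IntegrableOn f (Icc (0:ℝ) T) volume) : IntervalIntegrable f volume a T := by
  have h' : IntegrableOn f (uIcc a T) volume := by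
    rw [uIcc_of_le haT]
    exact h.mono_set (Icc_subset_Icc ha le_rfl)
  exact h'.intervalIntegrable
end Aux2

set_option maxHeartbeats 3000000 in
/-- Estimate on `w = 𝒯 ∘ D𝒢(y_*) v` from the verification of condition (C1):
`‖w‖²_X ≤ 2M(2T² + T + 𝔠̃² + T𝔠̃²(1+2T)M)‖v‖²_X`, and consequently `‖w‖_X < ‖v‖_X`
for nonzero `v` whenever `M` satisfies the smallness bound. -/
theorem lsfem_C1_estimate
    {d : ℕ} {T : ℝ} (hT : 0 < T)
    (F : Euc d → Euc d) (hF : ContDiff ℝ 1 F)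
    (𝔠t : ℝ) (hct : IsEmbL2 d T 𝔠t)
    (y y' : ℝ → Euc d) (hy : MemX T y y')
    (M : ℝ) (hM : M = sSup ((fun t => ‖fderiv ℝ F (y t)‖ ^ 2) '' Icc (0:ℝ) T))
    (v v' : ℝ → Euc d) (hv : MemX T v v')
    (w w' : ℝ → Euc d)
    (hw : w = fun t =>
      -(∫ s in (0:ℝ)..t, fderiv ℝ F (y s) (v s)) -
      (∫ s in (0:ℝ)..t, ∫ τ in s..T,
        (ContinuousLinearMap.adjoint (fderiv ℝ F (y τ))) (v' τ - fderiv ℝ F (y τ) (v τ))) -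
      ∫ s in (0:ℝ)..T,
        (ContinuousLinearMap.adjoint (fderiv ℝ F (y s))) (v' s - fderiv ℝ F (y s) (v s)))
    (hw' : w' = fun t =>
      -(fderiv ℝ F (y t) (v t)) -
      ∫ τ in t..T,
        (ContinuousLinearMap.adjoint (fderiv ℝ F (y τ))) (v' τ - fderiv ℝ F (y τ) (v τ))) :
    normX T w w' ^ 2 ≤
      2 * M * (2*T^2 + T + 𝔠t^2 + T*𝔠t^2*(1+2*T)*M) * normX T v v' ^ 2 ∧
    (M < 1 / (2*T^2 + T + 𝔠t^2 + Real.sqrt ((2*T^2 + T + 𝔠t^2)^2 + 2*T*𝔠t^2*(1+2*T))) →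
      0 < normX T v v' → normX T w w' < normX T v v') := by
  classical
  have hT0 : (0:ℝ) ≤ T := hT.le
  haveI := aux_finite (T := T)
  set A : ℝ → Euc d →L[ℝ] Euc d := auxA F y with hAdef
  set g : ℝ → Euc d := auxg F y v v' with hgdef
  -- rewrite w, w' in terms of A and g
  have hw0eq : w 0 = -(∫ s in (0:ℝ)..T, g s) := by
    rw [hw]
    simp only [intervalIntegral.integral_same, neg_zero, zero_sub, neg_zero, sub_zero]
    rfl
  have hw'2 : w' = fun t => -(A t (v t)) - ∫ τ in t..T, g τ := hw'
  -- continuity facts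
  have hyc : ContinuousOn y (Icc (0:ℝ) T) := aux_cont hT0 hy
  have hvc : ContinuousOn v (Icc (0:ℝ) T) := aux_cont hT0 hv
  have hAc : ContinuousOn A (Icc (0:ℝ) T) :=
    (hF.continuous_fderiv one_ne_zero).comp_continuousOn hyc
  have hAvc : ContinuousOn (fun τ => A τ (v τ)) (Icc (0:ℝ) T) := hAc.clm_apply hvc
  have hadjc : ContinuousOn (fun τ => ContinuousLinearMap.adjoint (A τ)) (Icc (0:ℝ) T) :=
    (ContinuousLinearMap.adjoint (𝕜 := ℝ) (E := Euc d) (F := Euc d)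
      : (Euc d →L[ℝ] Euc d) ≃ₗᵢ⋆[ℝ] (Euc d →L[ℝ] Euc d)).continuous.comp_continuousOn hAc
  -- bound on ‖A t‖
  have hMub : ∀ t ∈ Icc (0:ℝ) T, ‖A t‖^2 ≤ M := by
    intro t ht
    have hbdd : BddAbove ((fun t => ‖A t‖^2) '' Icc (0:ℝ) T) :=
      (isCompact_Icc.image_of_continuousOn (hAc.norm.pow 2)).bddAbove
    have := le_csSup hbdd (mem_image_of_mem (fun t => ‖A t‖^2) ht)
    rwa [hM]
  have hM0 : 0 ≤ M := le_trans (sq_nonneg _) (hMub 0 ⟨le_refl _, hT0⟩)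
  set sM : ℝ := Real.sqrt M with hsMdef
  have hsM0 : 0 ≤ sM := Real.sqrt_nonneg M
  have hsM2 : sM^2 = M := Real.sq_sqrt hM0
  have hAn : ∀ t ∈ Icc (0:ℝ) T, ‖A t‖ ≤ sM := by
    intro t ht
    nlinarith [hMub t ht, norm_nonneg (A t)]
  -- measurability and MemLp facts for g
  have hv'm : AEStronglyMeasurable v' (volume.restrict (Icc (0:ℝ) T)) := hv.1.1
  have hAvm : AEStronglyMeasurable (fun τ => A τ (v τ)) (volume.restrict (Icc (0:ℝ) T)) :=
    hAvc.aestronglyMeasurable measurableSet_Icc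
  have hsubm : AEStronglyMeasurable (fun τ => v' τ - A τ (v τ))
      (volume.restrict (Icc (0:ℝ) T)) := hv'm.sub hAvm
  have hgm : AEStronglyMeasurable g (volume.restrict (Icc (0:ℝ) T)) := by
    have := ContinuousLinearMap.aestronglyMeasurable_comp₂
      ((ContinuousLinearMap.apply ℝ (Euc d)).flip)
      (hadjc.aestronglyMeasurable measurableSet_Icc) hsubm
    exact this
  have hAv2 : MemLp (fun τ => A τ (v τ)) 2 (volume.restrict (Icc (0:ℝ) T)) := by
    obtain ⟨C, hC⟩ := isCompact_Icc.exists_bound_of_continuousOn hAvc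
    exact MemLp.of_bound hAvm C <| by
      filter_upwards [ae_restrict_mem measurableSet_Icc] with x hx using hC x hx
  have hsub2 : MemLp (fun τ => v' τ - A τ (v τ)) 2 (volume.restrict (Icc (0:ℝ) T)) :=
    hv.1.sub hAv2
  have hgnorm : ∀ τ ∈ Icc (0:ℝ) T, ‖g τ‖ ≤ sM * ‖v' τ - A τ (v τ)‖ := by
    intro τ hτ
    have h1 : ‖g τ‖ ≤ ‖ContinuousLinearMap.adjoint (A τ)‖ * ‖v' τ - A τ (v τ)‖ :=
      (ContinuousLinearMap.adjoint (A τ)).le_opNorm _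
    have h2 : ‖ContinuousLinearMap.adjoint (A τ)‖ = ‖A τ‖ :=
      LinearIsometryEquiv.norm_map _ (A τ)
    rw [h2] at h1
    exact h1.trans (mul_le_mul_of_nonneg_right (hAn τ hτ) (norm_nonneg _))
  have hg2 : MemLp g 2 (volume.restrict (Icc (0:ℝ) T)) := by
    refine MemLp.of_le (hsub2.const_smul sM) hgm ?_
    filter_upwards [ae_restrict_mem measurableSet_Icc] with τ hτ
    calc ‖g τ‖ ≤ sM * ‖v' τ - A τ (v τ)‖ := hgnorm τ hτ
      _ = ‖sM • (v' τ - A τ (v τ))‖ := by rw [norm_smul, Real.norm_of_nonneg hsM0]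
  have hgIcc : IntegrableOn g (Icc (0:ℝ) T) volume := hg2.integrable one_le_two
  have hgii : IntervalIntegrable g volume 0 T := aux_ii hT0 hgIcc
  have hgii_t : ∀ t ∈ Icc (0:ℝ) T, IntervalIntegrable g volume 0 t := by
    intro t ht
    exact aux_ii ht.1 (hgIcc.mono_set (Icc_subset_Icc le_rfl ht.2))
  -- integral quantities
  set S : ℝ := ∫ τ in (0:ℝ)..T, ‖g τ‖ with hSdef
  set I1 : ℝ := ∫ τ in (0:ℝ)..T, ‖v' τ‖^2 with hI1def
  set I2 : ℝ := ∫ τ in (0:ℝ)..T, ‖v τ‖^2 with hI2def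
  set I3 : ℝ := ∫ τ in (0:ℝ)..T, ‖g τ‖^2 with hI3def
  set NV2 : ℝ := normX T v v' ^ 2 with hNV2def
  have hS0 : 0 ≤ S := intervalIntegral.integral_nonneg hT0 fun x _ => norm_nonneg _
  have hI1nn : 0 ≤ I1 := intervalIntegral.integral_nonneg hT0 fun x _ => sq_nonneg _
  have hI2nn : 0 ≤ I2 := intervalIntegral.integral_nonneg hT0 fun x _ => sq_nonneg _
  have hI3nn : 0 ≤ I3 := intervalIntegral.integral_nonneg hT0 fun x _ => sq_nonneg _
  have hCS : S^2 ≤ T * I3 := aux_cs hT0 hg2.norm fun x => norm_nonneg _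
  -- integrability of squares
  have hI1int : IntervalIntegrable (fun τ => ‖v' τ‖^2) volume 0 T :=
    aux_ii hT0 (aux_sq_int hv.1)
  have hI2int : IntervalIntegrable (fun τ => ‖v τ‖^2) volume 0 T :=
    aux_ii hT0 (hvc.norm.pow 2).integrableOn_Icc
  have hI3int : IntervalIntegrable (fun τ => ‖g τ‖^2) volume 0 T :=
    aux_ii hT0 (aux_sq_int hg2)
  -- pointwise bound for ‖g‖² and the bound for I3
  have hI3b : I3 ≤ 2*M*I1 + 2*M^2*I2 := by
    have hpt : ∀ τ ∈ Icc (0:ℝ) T, ‖g τ‖^2 ≤ 2*M*‖v' τ‖^2 + 2*M^2*‖v τ‖^2 := by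
      intro τ hτ
      have hb1 := hgnorm τ hτ
      have hb2 : ‖v' τ - A τ (v τ)‖ ≤ ‖v' τ‖ + ‖A τ (v τ)‖ := norm_sub_le _ _
      have hb3 : ‖A τ (v τ)‖ ≤ ‖A τ‖ * ‖v τ‖ := (A τ).le_opNorm _
      have hb4 := hAn τ hτ
      have hX : ‖v' τ - A τ (v τ)‖ ≤ ‖v' τ‖ + sM * ‖v τ‖ := by
        have : ‖A τ (v τ)‖ ≤ sM * ‖v τ‖ :=
          hb3.trans (mul_le_mul_of_nonneg_right hb4 (norm_nonneg _))
        linarith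
      have hX2 : ‖v' τ - A τ (v τ)‖^2 ≤ 2*‖v' τ‖^2 + 2*M*‖v τ‖^2 := by
        have h1 := pow_le_pow_left₀ (norm_nonneg (v' τ - A τ (v τ))) hX 2
        have h2 : (sM*‖v τ‖)^2 = M*‖v τ‖^2 := by rw [mul_pow, hsM2]
        nlinarith [sq_nonneg (‖v' τ‖ - sM*‖v τ‖)]
      have hq : ‖g τ‖^2 ≤ M * ‖v' τ - A τ (v τ)‖^2 := by
        have h3 := pow_le_pow_left₀ (norm_nonneg (g τ)) hb1 2
        rwa [mul_pow, hsM2] at h3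
      nlinarith [mul_le_mul_of_nonneg_left hX2 hM0]
    have := intervalIntegral.integral_mono_on (μ := volume) hT0 hI3int
      ((hI1int.const_mul (2*M)).add (hI2int.const_mul (2*M^2))) hpt
    calc I3 ≤ ∫ τ in (0:ℝ)..T, (2*M*‖v' τ‖^2 + 2*M^2*‖v τ‖^2) := this
      _ = 2*M*I1 + 2*M^2*I2 := by
        rw [intervalIntegral.integral_add (hI1int.const_mul (2*M))
          (hI2int.const_mul (2*M^2)), intervalIntegral.integral_const_mul,
          intervalIntegral.integral_const_mul]
  -- ‖w 0‖² ≤ T * I3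
  have hw0sq : ‖w 0‖^2 ≤ T * I3 := by
    rw [hw0eq, norm_neg]
    have hb : ‖∫ s in (0:ℝ)..T, g s‖ ≤ S :=
      intervalIntegral.norm_integral_le_integral_norm hT0
    calc ‖∫ s in (0:ℝ)..T, g s‖^2 ≤ S^2 := pow_le_pow_left₀ (norm_nonneg _) hb 2
      _ ≤ T * I3 := hCS
  -- continuity of w'
  have hQeq : ∀ t ∈ Icc (0:ℝ) T,
      (∫ τ in t..T, g τ) = (∫ τ in (0:ℝ)..T, g τ) - ∫ τ in (0:ℝ)..t, g τ := by
    intro t ht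
    rw [intervalIntegral.integral_interval_sub_left hgii (hgii_t t ht)]
  have hQc : ContinuousOn (fun t => ∫ τ in t..T, g τ) (Icc (0:ℝ) T) := by
    have hPc : ContinuousOn (fun t => ∫ s in (0:ℝ)..t, g s) (Icc (0:ℝ) T) := by
      have := intervalIntegral.continuousOn_primitive_interval
        (a := (0:ℝ)) (b := T) (μ := volume) (f := g) (by rwa [uIcc_of_le hT0])
      rwa [uIcc_of_le hT0] at this
    exact (continuousOn_const.sub hPc).congr hQeq
  have hw'c : ContinuousOn w' (Icc (0:ℝ) T) := by
    rw [hw'2]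
    exact hAvc.neg.sub hQc
  -- pointwise bound for ‖w'‖²
  have hw'pt : ∀ t ∈ Icc (0:ℝ) T, ‖w' t‖^2 ≤ 2*M*‖v t‖^2 + 2*(T*I3) := by
    intro t ht
    have h1 : ‖w' t‖ ≤ ‖A t (v t)‖ + ‖∫ τ in t..T, g τ‖ := by
      rw [hw'2]
      exact (norm_sub_le _ _).trans (by rw [norm_neg])
    have h2 : ‖A t (v t)‖ ≤ sM * ‖v t‖ :=
      ((A t).le_opNorm _).trans (mul_le_mul_of_nonneg_right (hAn t ht) (norm_nonneg _))
    have h3 : ‖∫ τ in t..T, g τ‖ ≤ S := by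
      have h4 : ‖∫ τ in t..T, g τ‖ ≤ ∫ τ in t..T, ‖g τ‖ :=
        intervalIntegral.norm_integral_le_integral_norm ht.2
      have h5 : (∫ τ in t..T, ‖g τ‖) ≤ S := by
        have hsplit : (∫ τ in (0:ℝ)..t, ‖g τ‖) + (∫ τ in t..T, ‖g τ‖) = S :=
          intervalIntegral.integral_add_adjacent_intervals (hgii_t t ht).norm
            (aux_ii2 ht.1 ht.2 hgIcc.norm)
        have hnn : 0 ≤ ∫ τ in (0:ℝ)..t, ‖g τ‖ :=
          intervalIntegral.integral_nonneg ht.1 fun x _ => norm_nonneg _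
        linarith
      exact h4.trans h5
    have h6 : ‖w' t‖ ≤ sM * ‖v t‖ + S := by linarith
    have h7 := pow_le_pow_left₀ (norm_nonneg (w' t)) h6 2
    have h8 : (sM*‖v t‖)^2 = M*‖v t‖^2 := by rw [mul_pow, hsM2]
    nlinarith [sq_nonneg (sM*‖v t‖ - S), hCS]
  -- integral bound for ∫‖w'‖²
  have hW : (∫ t in (0:ℝ)..T, ‖w' t‖^2) ≤ 2*M*I2 + 2*(T*I3)*T := by
    have hlhs : IntervalIntegrable (fun t => ‖w' t‖^2) volume 0 T :=
      aux_ii hT0 (hw'c.norm.pow 2).integrableOn_Icc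
    have hrhs : IntervalIntegrable (fun t => 2*M*‖v t‖^2 + 2*(T*I3)) volume 0 T :=
      (hI2int.const_mul (2*M)).add intervalIntegrable_const
    have := intervalIntegral.integral_mono_on (μ := volume) hT0 hlhs hrhs hw'pt
    calc (∫ t in (0:ℝ)..T, ‖w' t‖^2)
        ≤ ∫ t in (0:ℝ)..T, (2*M*‖v t‖^2 + 2*(T*I3)) := this
      _ = 2*M*I2 + 2*(T*I3)*T := by
          rw [intervalIntegral.integral_add (hI2int.const_mul (2*M))
            intervalIntegrable_const, intervalIntegral.integral_const_mul,
            intervalIntegral.integral_const]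
          simp [smul_eq_mul]
          ring
  -- embedding bounds
  have hN2 : NV2 = I1 + ‖v 0‖^2 := aux_normX_sq hT0 v v'
  have hI1le : I1 ≤ NV2 := by rw [hN2]; nlinarith [sq_nonneg ‖v 0‖]
  have hNV2nn : 0 ≤ NV2 := sq_nonneg _
  have hI2le : I2 ≤ 𝔠t^2 * NV2 := by
    have hct1 := hct.1 v v' hv
    have hL2 : L2norm T v = Real.sqrt I2 := rfl
    have h1 : I2 = L2norm T v ^ 2 := by rw [hL2, Real.sq_sqrt hI2nn]
    calc I2 = L2norm T v ^ 2 := h1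
      _ ≤ (𝔠t * normX T v v')^2 := pow_le_pow_left₀ (Real.sqrt_nonneg _) hct1 2
      _ = 𝔠t^2 * NV2 := by rw [mul_pow]
  -- main estimate
  have main : normX T w w' ^ 2 ≤
      2 * M * (2*T^2 + T + 𝔠t^2 + T*𝔠t^2*(1+2*T)*M) * NV2 := by
    have e2 : 2*M*I2 ≤ 2*M*(𝔠t^2*NV2) :=
      mul_le_mul_of_nonneg_left hI2le (by linarith)
    have e3 : 2*M*I1 ≤ 2*M*NV2 := mul_le_mul_of_nonneg_left hI1le (by linarith)
    have e4 : 2*M^2*I2 ≤ 2*M^2*(𝔠t^2*NV2) :=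
      mul_le_mul_of_nonneg_left hI2le (by positivity)
    have e1 : (2*T^2+T) * I3 ≤ (2*T^2+T) * (2*M*NV2 + 2*M^2*(𝔠t^2*NV2)) := by
      apply le_trans (mul_le_mul_of_nonneg_left hI3b (by nlinarith))
      apply mul_le_mul_of_nonneg_left _ (by nlinarith)
      linarith
    calc normX T w w' ^ 2 = (∫ t in (0:ℝ)..T, ‖w' t‖^2) + ‖w 0‖^2 :=
          aux_normX_sq hT0 w w'
      _ ≤ (2*M*I2 + 2*(T*I3)*T) + T*I3 := add_le_add hW hw0sq
      _ = 2*M*I2 + (2*T^2+T)*I3 := by ring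
      _ ≤ 2*M*(𝔠t^2*NV2) + (2*T^2+T) * (2*M*NV2 + 2*M^2*(𝔠t^2*NV2)) := add_le_add e2 e1
      _ = 2 * M * (2*T^2 + T + 𝔠t^2 + T*𝔠t^2*(1+2*T)*M) * NV2 := by ring
  refine ⟨main, ?_⟩
  -- second part
  intro hMlt hVpos
  obtain ⟨B, hBdef⟩ : ∃ B : ℝ, B = 2*T^2 + T + 𝔠t^2 := ⟨_, rfl⟩
  obtain ⟨C, hCdef⟩ : ∃ C : ℝ, C = 2*T*𝔠t^2*(1+2*T) := ⟨_, rfl⟩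
  obtain ⟨R, hRdef⟩ : ∃ R : ℝ, R = Real.sqrt (B^2 + C) := ⟨_, rfl⟩
  have hMlt' : M < 1 / (B + R) := by rw [hRdef, hBdef, hCdef]; exact hMlt
  have hC0 : 0 ≤ C := by
    have h0 : 0 ≤ T*𝔠t^2 := mul_nonneg hT0 (sq_nonneg _)
    rw [hCdef]; nlinarith
  have hB0 : 0 < B := by rw [hBdef]; nlinarith [sq_nonneg 𝔠t, sq_nonneg T]
  have hR2 : R^2 = B^2 + C := by rw [hRdef]; exact Real.sq_sqrt (by nlinarith)
  have hR0 : 0 ≤ R := hRdef ▸ Real.sqrt_nonneg _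
  have hRB : B ≤ R := by nlinarith
  have hM1 : M * (B + R) < 1 := by
    rw [lt_div_iff₀ (by linarith : (0:ℝ) < B + R)] at hMlt'
    linarith
  have hK : 2*M*B + C*M^2 < 1 := by
    have hCeq : C = R^2 - B^2 := by linarith
    rw [hCeq]
    have hh : 0 ≤ (M*(R-B)) * (1 - M*(B+R)) :=
      mul_nonneg (mul_nonneg hM0 (sub_nonneg.2 hRB)) (sub_nonneg.2 hM1.le)
    nlinarith [hh]
  have hNV2pos : 0 < NV2 := pow_pos hVpos 2
  have main2 : normX T w w' ^ 2 ≤ (2*M*B + C*M^2) * NV2 :=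
    le_trans main (le_of_eq (by rw [hBdef, hCdef]; ring))
  have hlt : normX T w w' ^ 2 < NV2 := by
    calc normX T w w' ^ 2 ≤ (2*M*B + C*M^2) * NV2 := main2
      _ < 1 * NV2 := mul_lt_mul_of_pos_right hK hNV2pos
      _ = NV2 := one_mul _
  exact lt_of_pow_lt_pow_left₀ 2 hVpos.le hlt
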